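/- Let Ω be a bounded domain, and let (v_j) be a decreasing sequence of continuous functions on the closure of Ω converging pointwise to a continuous function on ∂Ω. Suppose there exist constants C > 0 and 0 < γ < 1 such that for all j, sup_Ω (v_j − U) ≤ sup_{∂Ω}(v_j − U) + C ‖v_j − U‖_{L¹(Ω)}^γ, where U is a bounded function with v_j ≥ U and v_j → U pointwise on Ω̄. Then v_j converges uniformly to U on Ω̄, and in particular U is continuous on Ω̄. -/

import Mathlib

open MeasureTheory Filter Topology

noncomputable section

/-- Dini's theorem (one-sided version on a compact set). -/
theorem dini_aux {X : Type*} [TopologicalSpace X] {K : Set X} (hK : IsCompact K)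
    {f : ℕ → X → ℝ} {g : X → ℝ} (hf : ∀ n, ContinuousOn (f n) K)
    (hg : ContinuousOn g K)
    (hanti : ∀ m n, m ≤ n → ∀ x ∈ K, f n x ≤ f m x)
    (hlim : ∀ x ∈ K, Tendsto (fun n => f n x) atTop (𝓝 (g x)))
    {ε : ℝ} (hε : 0 < ε) :
    ∀ᶠ n in atTop, ∀ x ∈ K, f n x - g x < ε := by
  have hx : ∀ x, ∃ N, ∃ u : Set X, IsOpen u ∧ x ∈ u ∧
      (x ∈ K → ∀ y ∈ u ∩ K, f N y - g y < ε) := by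
    intro x
    by_cases hxK : x ∈ K
    · obtain ⟨N, hN⟩ : ∃ N, f N x - g x < ε / 2 := by
        obtain ⟨N, hN⟩ :=
          ((hlim x hxK).eventually_lt_const (show g x < g x + ε / 2 by linarith)).exists
        exact ⟨N, by linarith⟩
      have hc : ContinuousWithinAt (fun y => f N y - g y) K x :=
        ((hf N).sub hg).continuousWithinAt hxK
      have hev : ∀ᶠ y in 𝓝[K] x, f N y - g y < ε :=
        hc.eventually_lt_const (by change f N x - g x < ε; linarith)
      rw [eventually_iff, mem_nhdsWithin] at hev
      obtain ⟨u, huo, hxu, hu⟩ := hev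
      exact ⟨N, u, huo, hxu, fun _ y hy => hu hy⟩
    · exact ⟨0, Set.univ, isOpen_univ, Set.mem_univ x, fun h => absurd h hxK⟩
  choose N u huo hxu hprop using hx
  obtain ⟨t, htK, hcover⟩ := hK.elim_nhds_subcover u (fun x _ => (huo x).mem_nhds (hxu x))
  filter_upwards [eventually_ge_atTop (t.sup N)] with n hn x hxK
  obtain ⟨x₀, hx₀t, hxu₀⟩ := Set.mem_iUnion₂.1 (hcover hxK)
  have h1 : f n x ≤ f (N x₀) x := hanti _ _ (le_trans (Finset.le_sup hx₀t) hn) x hxK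
  have h2 := hprop x₀ (htK x₀ hx₀t) x ⟨hxu₀, hxK⟩
  linarith

/-- **Uniform convergence from the stability estimate (Step 1 of Theorem 2.5).**
Let `Ω` be a bounded domain, `(v j)` a decreasing sequence of continuous functions on
`closure Ω` converging pointwise to the bounded function `U` on `closure Ω`, with `v j ≥ U`,
the limit being continuous on `∂Ω`.  If `sup_Ω (v j − U) ≤ sup_{∂Ω} (v j − U) + C‖v j − U‖₁^γ`
for all `j`, with `C > 0` and `0 < γ < 1`, then `v j → U` uniformly on `closure Ω`, and in
particular `U` is continuous on `closure Ω`. -/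
theorem uniform_convergence_from_stability {d : ℕ}
    (Ω : Set (EuclideanSpace ℝ (Fin d))) (hΩo : IsOpen Ω) (hΩc : IsConnected Ω)
    (hΩb : Bornology.IsBounded Ω)
    (v : ℕ → EuclideanSpace ℝ (Fin d) → ℝ) (U : EuclideanSpace ℝ (Fin d) → ℝ)
    (hvcont : ∀ j, ContinuousOn (v j) (closure Ω))
    (hdec : ∀ j, ∀ x ∈ closure Ω, v (j + 1) x ≤ v j x)
    (hUb : ∃ M, ∀ x ∈ closure Ω, |U x| ≤ M)
    (hge : ∀ j, ∀ x ∈ closure Ω, U x ≤ v j x)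
    (hlim : ∀ x ∈ closure Ω, Tendsto (fun j => v j x) atTop (𝓝 (U x)))
    (hUfr : ContinuousOn U (frontier Ω))
    (C γ : ℝ) (hC : 0 < C) (hγ0 : 0 < γ) (hγ1 : γ < 1)
    (hstab : ∀ j, sSup ((fun x => v j x - U x) '' Ω) ≤
      sSup ((fun x => v j x - U x) '' frontier Ω) +
        C * (∫ x in Ω, |v j x - U x|) ^ γ) :
    TendstoUniformlyOn (fun j x => v j x) U atTop (closure Ω) ∧
      ContinuousOn U (closure Ω) := by
  obtain ⟨M, hM⟩ := hUb
  have hK : IsCompact (closure Ω) := hΩb.isCompact_closure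
  have hfr : frontier Ω ⊆ closure Ω := frontier_subset_closure
  have hsub : Ω ⊆ closure Ω := subset_closure
  -- antitonicity in `j`
  have hanti : ∀ m n, m ≤ n → ∀ x ∈ closure Ω, v n x ≤ v m x := by
    intro m n hmn
    induction n, hmn using Nat.le_induction with
    | base => exact fun x _ => le_rfl
    | succ n hmn ih =>
      intro x hx
      exact le_trans (hdec n x hx) (ih x hx)
  -- the L¹ term tends to zero
  have hmes : ∀ j, AEMeasurable (v j) (volume.restrict Ω) := fun j =>
    ((hvcont j).mono hsub).aemeasurable hΩo.measurableSet
  have hUmes : AEMeasurable U (volume.restrict Ω) := by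
    apply aemeasurable_of_tendsto_metrizable_ae atTop hmes
    filter_upwards [ae_restrict_mem hΩo.measurableSet] with x hx
    exact hlim x (hsub hx)
  obtain ⟨M0, hM0⟩ := hK.exists_bound_of_continuousOn (hvcont 0)
  have hB : Tendsto (fun j => ∫ x in Ω, |v j x - U x|) atTop (𝓝 0) := by
    have := MeasureTheory.tendsto_integral_of_dominated_convergence
      (F := fun j x => |v j x - U x|) (f := fun _ => (0 : ℝ)) (bound := fun _ => M0 + M)
      (μ := volume.restrict Ω)
      (fun j => by
        have := (((hmes j).sub hUmes).aestronglyMeasurable).norm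
        simpa [Real.norm_eq_abs] using this)
      (integrableOn_const hΩb.measure_lt_top.ne)
      (by
        intro j
        filter_upwards [ae_restrict_mem hΩo.measurableSet] with x hx
        have hx' := hsub hx
        have h1 : 0 ≤ v j x - U x := sub_nonneg.2 (hge j x hx')
        have h2 : v j x ≤ v 0 x := hanti 0 j (Nat.zero_le j) x hx'
        have h3 : ‖v 0 x‖ ≤ M0 := hM0 x hx'
        have h4 : |U x| ≤ M := hM x hx'
        rw [Real.norm_eq_abs, abs_abs, abs_of_nonneg h1]
        have h5 : -M ≤ U x := (abs_le.1 h4).1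
        have h6 : v 0 x ≤ M0 := le_trans (le_abs_self _)
          (by simpa [Real.norm_eq_abs] using h3)
        linarith)
      (by
        filter_upwards [ae_restrict_mem hΩo.measurableSet] with x hx
        have : Tendsto (fun j => v j x - U x) atTop (𝓝 (U x - U x)) :=
          (hlim x (hsub hx)).sub tendsto_const_nhds
        rw [sub_self] at this
        simpa [abs_zero] using this.abs)
    simpa using this
  have hCB : Tendsto (fun j => C * (∫ x in Ω, |v j x - U x|) ^ γ) atTop (𝓝 0) := by
    have h1 : Tendsto (fun j => (∫ x in Ω, |v j x - U x|) ^ γ) atTop (𝓝 0) := by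
      have := ((Real.continuousAt_rpow_const 0 γ (Or.inr hγ0.le)).tendsto).comp hB
      simpa [Function.comp_def, Real.zero_rpow hγ0.ne'] using this
    simpa using h1.const_mul C
  -- the key estimate
  have key : ∀ ε > 0, ∀ᶠ j in atTop, ∀ x ∈ closure Ω, v j x - U x < ε := by
    intro ε hε
    have hdini : ∀ᶠ j in atTop, ∀ x ∈ frontier Ω, v j x - U x < ε / 4 :=
      dini_aux (hK.of_isClosed_subset isClosed_frontier hfr)
        (fun n => (hvcont n).mono hfr) hUfr
        (fun m n hmn x hx => hanti m n hmn x (hfr hx))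
        (fun x hx => hlim x (hfr hx)) (by linarith)
    filter_upwards [hdini, hCB.eventually_lt_const (show (0:ℝ) < ε / 2 by linarith)]
      with j h1 h2 x hx
    rw [closure_eq_self_union_frontier] at hx
    rcases hx with hx | hx
    · -- x ∈ Ω : use the stability estimate
      have hbdd : BddAbove ((fun x => v j x - U x) '' Ω) := by
        obtain ⟨Mj, hMj⟩ := hK.exists_bound_of_continuousOn (hvcont j)
        refine ⟨Mj + M, ?_⟩
        rintro y ⟨z, hz, rfl⟩
        have hz' := hsub hz
        have h3 : v j z ≤ Mj := le_trans (le_abs_self _)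
          (by simpa [Real.norm_eq_abs] using hMj z hz')
        have h4 : -M ≤ U z := (abs_le.1 (hM z hz')).1
        show v j z - U z ≤ Mj + M
        linarith
      have hle : v j x - U x ≤ sSup ((fun x => v j x - U x) '' Ω) :=
        le_csSup hbdd (Set.mem_image_of_mem _ hx)
      have hfrle : sSup ((fun x => v j x - U x) '' frontier Ω) ≤ ε / 4 := by
        apply Real.sSup_le
        · rintro y ⟨z, hz, rfl⟩
          exact le_of_lt (h1 z hz)
        · linarith
      have := hstab j
      linarith
    · have := h1 x hx
      linarith
  have huc : TendstoUniformlyOn (fun j x => v j x) U atTop (closure Ω) := by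
    rw [Metric.tendstoUniformlyOn_iff]
    intro ε hε
    filter_upwards [key ε hε] with j hj x hx
    have h0 : 0 ≤ v j x - U x := sub_nonneg.2 (hge j x hx)
    rw [Real.dist_eq, abs_sub_comm, abs_of_nonneg h0]
    exact hj x hx
  exact ⟨huc, huc.continuousOn (Eventually.of_forall hvcont).frequently⟩
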